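/- Let τ > 0, let K ⊆ ℝⁿ, let f : ℝⁿ × ℝⁿ → ℝⁿ be continuously differentiable in its second argument, let h₀, h₁, w : ℝⁿ → ℝ be continuously differentiable, let e₂, e₃ : ℝⁿ → ℝⁿ and C ∈ ℝⁿ. Fix t ∈ ℝ and let x : ℝ → ℝⁿ be continuously differentiable on [t−τ, t] with x(θ) ∈ K and |x′(θ)| ≤ C coordinatewise for all θ ∈ [t−τ, t], and with x′(t) = f(x(t), x(t−τ)). Assume that coordinatewise, for all a, b ∈ K: |∇h₁(b)| ≤ e₂(a) and |∇w(a)ᵀ·J_y f(a,b)| ≤ e₃(a)ᵀ. Then h₀(x(t)) + ∫_{t−τ}^{t} h₁(x(θ)) dθ − ∇w(x(t))·x′(t) ≥ h₀(x(t)) + τ·h₁(x(t)) − (τ²/2)·e₂(x(t))ᵀC − τ·e₃(x(t))ᵀC − ∇w(x(t))·f(x(t), x(t)). -/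

import Mathlib

open intervalIntegral

lemma aux_abs_clm {n : ℕ} (L : (Fin n → ℝ) →L[ℝ] ℝ) (v C e : Fin n → ℝ)
    (hv : ∀ i, |v i| ≤ C i) (he : ∀ i, |L (Pi.single i 1)| ≤ e i) :
    |L v| ≤ ∑ i, e i * C i := by
  have hv' : v = ∑ i, v i • (Pi.single i 1 : Fin n → ℝ) := by
    have h1 : ∀ i, v i • (Pi.single i 1 : Fin n → ℝ) = Pi.single i (v i) := by
      intro i; ext j; by_cases h : j = i <;> simp [Pi.single_apply, h]
    simp_rw [h1]
    exact (Finset.univ_sum_single v).symm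
  calc |L v| = |∑ i, v i * L (Pi.single i 1)| := by
        conv_lhs => rw [hv']
        rw [map_sum]; simp [smul_eq_mul]
    _ ≤ ∑ i, |v i * L (Pi.single i 1)| := Finset.abs_sum_le_sum_abs _ _
    _ ≤ ∑ i, e i * C i := by
        refine Finset.sum_le_sum fun i _ => ?_
        rw [abs_mul, mul_comm]
        exact mul_le_mul (he i) (hv i) (abs_nonneg _) ((abs_nonneg _).trans (he i))

/-- Lower bound on `H(x_t) - (d/dt) w(x(t))` for the integral-form reach-avoid
barrier functional (derivation of the reach condition (2c) from (6c) in the proof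
of Theorem 2): under the coordinatewise bounds `|∇h₁(b)| ≤ e₂(a)` and
`|∇w(a)ᵀ·J_y f(a,b)| ≤ e₃(a)ᵀ` on `K`, `|x'| ≤ C` on `[t-τ, t]`, and
`x'(t) = f(x(t), x(t-τ))`,
`h₀(x t) + ∫_{t-τ}^{t} h₁(x θ) dθ - ∇w(x t)·x'(t) ≥
 h₀(x t) + τ·h₁(x t) - (τ²/2)·e₂(x t)ᵀC - τ·e₃(x t)ᵀC - ∇w(x t)·f(x t, x t)`. -/
theorem stmt_5 {n : ℕ} (τ : ℝ) (hτ : 0 < τ) (K : Set (Fin n → ℝ))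
    (f : (Fin n → ℝ) → (Fin n → ℝ) → (Fin n → ℝ))
    (hf : ∀ a : Fin n → ℝ, ContDiff ℝ 1 (f a))
    (h₀ h₁ w : (Fin n → ℝ) → ℝ)
    (hh₀ : ContDiff ℝ 1 h₀) (hh₁ : ContDiff ℝ 1 h₁) (hw : ContDiff ℝ 1 w)
    (e₂ e₃ : (Fin n → ℝ) → (Fin n → ℝ)) (C : Fin n → ℝ)
    (t : ℝ) (x x' : ℝ → (Fin n → ℝ))
    (hx : ∀ θ ∈ Set.Icc (t - τ) t, HasDerivAt x (x' θ) θ)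
    (hx'c : ContinuousOn x' (Set.Icc (t - τ) t))
    (hxK : ∀ θ ∈ Set.Icc (t - τ) t, x θ ∈ K)
    (hx'C : ∀ θ ∈ Set.Icc (t - τ) t, ∀ i, |x' θ i| ≤ C i)
    (hx't : x' t = f (x t) (x (t - τ)))
    (he₂ : ∀ a ∈ K, ∀ b ∈ K, ∀ i, |fderiv ℝ h₁ b (Pi.single i 1)| ≤ e₂ a i)
    (he₃ : ∀ a ∈ K, ∀ b ∈ K, ∀ j,
      |fderiv ℝ w a (fderiv ℝ (f a) b (Pi.single j 1))| ≤ e₃ a j) :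
    h₀ (x t) + τ * h₁ (x t) - (τ ^ 2 / 2) * ∑ i, e₂ (x t) i * C i
        - τ * ∑ i, e₃ (x t) i * C i - fderiv ℝ w (x t) (f (x t) (x t)) ≤
      h₀ (x t) + (∫ θ in (t - τ)..t, h₁ (x θ)) - fderiv ℝ w (x t) (x' t) := by
  set a := x t with ha
  have hle : t - τ ≤ t := by linarith
  have hmem_t : t ∈ Set.Icc (t - τ) t := ⟨hle, le_rfl⟩
  have hmem_tτ : t - τ ∈ Set.Icc (t - τ) t := ⟨le_rfl, hle⟩
  have hconv : Convex ℝ (Set.Icc (t - τ) t) := convex_Icc _ _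
  have haK : a ∈ K := hxK t hmem_t
  set E₂ := ∑ i, e₂ a i * C i with hE₂
  set E₃ := ∑ i, e₃ a i * C i with hE₃
  have hxc : ContinuousOn x (Set.Icc (t - τ) t) := fun θ hθ =>
    (hx θ hθ).continuousAt.continuousWithinAt
  -- Part (b): bound on the w-term
  have hb : fderiv ℝ w a (x' t) ≤ fderiv ℝ w a (f a a) + τ * E₃ := by
    have hGd : ∀ θ ∈ Set.Icc (t - τ) t,
        HasDerivWithinAt (fun θ => fderiv ℝ w a (f a (x θ)))
          (fderiv ℝ w a (fderiv ℝ (f a) (x θ) (x' θ))) (Set.Icc (t - τ) t) θ := by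
      intro θ hθ
      have h1 : HasDerivAt (fun θ => f a (x θ)) (fderiv ℝ (f a) (x θ) (x' θ)) θ :=
        (((hf a).differentiable one_ne_zero (x θ)).hasFDerivAt).comp_hasDerivAt θ (hx θ hθ)
      exact ((fderiv ℝ w a).hasFDerivAt.comp_hasDerivAt θ h1).hasDerivWithinAt
    have hbound : ∀ θ ∈ Set.Icc (t - τ) t,
        ‖fderiv ℝ w a (fderiv ℝ (f a) (x θ) (x' θ))‖ ≤ E₃ := by
      intro θ hθ
      rw [Real.norm_eq_abs]
      have := aux_abs_clm ((fderiv ℝ w a).comp (fderiv ℝ (f a) (x θ))) (x' θ) C (e₃ a)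
        (hx'C θ hθ) (fun j => by simpa using he₃ a haK (x θ) (hxK θ hθ) j)
      simpa using this
    have hkey := hconv.norm_image_sub_le_of_norm_hasDerivWithin_le hGd hbound hmem_t hmem_tτ
    rw [Real.norm_eq_abs, Real.norm_eq_abs] at hkey
    have habs : |t - τ - t| = τ := by rw [abs_of_nonpos (by linarith)]; ring
    rw [habs] at hkey
    have h2 := (abs_le.mp hkey).2
    have hGtτ : fderiv ℝ w a (f a (x (t - τ))) = fderiv ℝ w a (x' t) := by
      rw [hx't]
    rw [hGtτ] at h2
    linarith
  -- Part (a): bound on the integral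
  have hFd : ∀ θ ∈ Set.Icc (t - τ) t,
      HasDerivWithinAt (fun θ => h₁ (x θ)) (fderiv ℝ h₁ (x θ) (x' θ))
        (Set.Icc (t - τ) t) θ := fun θ hθ =>
    (((hh₁.differentiable one_ne_zero (x θ)).hasFDerivAt).comp_hasDerivAt θ
      (hx θ hθ)).hasDerivWithinAt
  have hFbound : ∀ θ ∈ Set.Icc (t - τ) t, ‖fderiv ℝ h₁ (x θ) (x' θ)‖ ≤ E₂ := by
    intro θ hθ
    rw [Real.norm_eq_abs]
    exact aux_abs_clm (fderiv ℝ h₁ (x θ)) (x' θ) C (e₂ a) (hx'C θ hθ)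
      (fun i => he₂ a haK (x θ) (hxK θ hθ) i)
  have hptwise : ∀ θ ∈ Set.Icc (t - τ) t, h₁ a - E₂ * (t - θ) ≤ h₁ (x θ) := by
    intro θ hθ
    have hkey := hconv.norm_image_sub_le_of_norm_hasDerivWithin_le hFd hFbound hmem_t hθ
    rw [Real.norm_eq_abs, Real.norm_eq_abs] at hkey
    have habs : |θ - t| = t - θ := by rw [abs_of_nonpos (by linarith [hθ.2])]; ring
    rw [habs] at hkey
    have h2 := (abs_le.mp hkey).1
    nlinarith
  have hint1 : IntervalIntegrable (fun θ => h₁ (x θ)) MeasureTheory.volume (t - τ) t := by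
    apply ContinuousOn.intervalIntegrable
    rw [Set.uIcc_of_le hle]
    exact hh₁.continuous.comp_continuousOn hxc
  have hint0 : IntervalIntegrable (fun θ => h₁ a - E₂ * (t - θ))
      MeasureTheory.volume (t - τ) t :=
    (Continuous.intervalIntegrable (by continuity) _ _)
  have hmono := intervalIntegral.integral_mono_on hle hint0 hint1 hptwise
  have hcalc : (∫ θ in (t - τ)..t, (h₁ a - E₂ * (t - θ)))
      = τ * h₁ a - τ ^ 2 / 2 * E₂ := by
    have heq : (fun θ => h₁ a - E₂ * (t - θ)) = fun θ => (h₁ a - E₂ * t) + E₂ * θ := by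
      funext θ; ring
    rw [heq, intervalIntegral.integral_add intervalIntegrable_const
        ((show Continuous fun θ : ℝ => E₂ * θ from continuous_const.mul continuous_id').intervalIntegrable _ _),
      intervalIntegral.integral_const, intervalIntegral.integral_const_mul,
      integral_id, smul_eq_mul]
    ring
  rw [hcalc] at hmono
  linarith
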